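/- For each fixed t > 0 and all 0 < u, v ≤ t, one has f(u)ᵀ·α_t·f(v) = ∫_t^∞ k(r,u)·k(r,v) dr + f(u)ᵀ·α_∞·f(v), where the improper integral converges. In particular the kernel system κ_t(u,v) := f(u)ᵀ·α_t·f(v) satisfies k(t,s) = κ_t(t,s) for all 0 < s ≤ t < ∞. -/

import Mathlib

open MeasureTheory Filter Topology Matrix

lemma const_of_sq_increment (h M : ℝ → ℝ) {a b : ℝ} (hab : a ≤ b) (K : ℝ) (hK : 0 ≤ K)
    (hMc : ContinuousOn M (Set.Icc a b))
    (hMm : ∀ x y, a ≤ x → x ≤ y → y ≤ b → M x ≤ M y)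
    (hbound : ∀ x y, a ≤ x → x ≤ y → y ≤ b → |h y - h x| ≤ K * (M y - M x) ^ 2) :
    h b = h a := by
  have key : ∀ ε > (0:ℝ), |h b - h a| ≤ ε * (M b - M a) := by
    intro ε hε
    set S : Set ℝ := {x | x ∈ Set.Icc a b ∧ |h x - h a| ≤ ε * (M x - M a)} with hS
    have haS : a ∈ S := by
      refine ⟨⟨le_refl a, hab⟩, ?_⟩
      simp
    have hSne : S.Nonempty := ⟨a, haS⟩
    have hSbdd : BddAbove S := ⟨b, fun x hx => hx.1.2⟩
    set c := sSup S with hc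
    have hac : a ≤ c := le_csSup hSbdd haS
    have hcb : c ≤ b := csSup_le hSne (fun x hx => hx.1.2)
    have hcIcc : c ∈ Set.Icc a b := ⟨hac, hcb⟩
    -- c ∈ S
    have hcS : |h c - h a| ≤ ε * (M c - M a) := by
      refine le_of_forall_pos_le_add ?_
      intro δ hδ
      have hη : (0:ℝ) < Real.sqrt (δ / (K + 1)) := by
        apply Real.sqrt_pos.2
        positivity
      obtain ⟨γ, hγ, hγ'⟩ := Metric.continuousWithinAt_iff.1 (hMc c hcIcc) _ hη
      obtain ⟨x, hxS, hxc⟩ : ∃ x ∈ S, c - γ < x := exists_lt_of_lt_csSup hSne (by linarith)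
      have hxle : x ≤ c := le_csSup hSbdd hxS
      have hdist : dist x c < γ := by
        rw [Real.dist_eq, abs_lt]; constructor <;> linarith
      have hMxc : |M x - M c| < Real.sqrt (δ / (K + 1)) := by
        have := hγ' hxS.1 hdist
        rwa [Real.dist_eq] at this
      have hMmono : M x ≤ M c := hMm x c hxS.1.1 hxle hcb
      have h1 : |h c - h x| ≤ K * (M c - M x) ^ 2 := hbound x c hxS.1.1 hxle hcb
      have h2 : (M c - M x) ^ 2 ≤ δ / (K + 1) := by
        have : M c - M x < Real.sqrt (δ / (K + 1)) := by
          rw [abs_sub_comm] at hMxc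
          calc M c - M x ≤ |M c - M x| := le_abs_self _
          _ < _ := hMxc
        have hsq : (M c - M x) ^ 2 ≤ Real.sqrt (δ / (K + 1)) ^ 2 := by
          apply sq_le_sq'
          · linarith
          · linarith
        rwa [Real.sq_sqrt (by positivity)] at hsq
      have h3 : K * (M c - M x) ^ 2 ≤ δ := by
        calc K * (M c - M x) ^ 2 ≤ K * (δ / (K + 1)) := by
              apply mul_le_mul_of_nonneg_left h2 hK
        _ ≤ δ := by
              rw [div_eq_mul_inv]
              rw [← mul_assoc]
              have : K * δ ≤ (K + 1) * δ := by nlinarith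
              calc K * δ * (K + 1)⁻¹ ≤ (K + 1) * δ * (K + 1)⁻¹ := by
                    apply mul_le_mul_of_nonneg_right this; positivity
              _ = δ := by field_simp
      have hMa : M x - M a ≤ M c - M a := by
        have := hMm x c hxS.1.1 hxle hcb; linarith
      calc |h c - h a| ≤ |h c - h x| + |h x - h a| := by
            have := abs_sub_abs_le_abs_sub (h c - h a) (h x - h a)
            have := abs_add_le (h c - h x) (h x - h a)
            have heq : h c - h a = (h c - h x) + (h x - h a) := by ring
            rw [heq]; exact abs_add_le _ _
      _ ≤ K * (M c - M x) ^ 2 + ε * (M x - M a) := add_le_add h1 hxS.2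
      _ ≤ δ + ε * (M c - M a) := by
            have : ε * (M x - M a) ≤ ε * (M c - M a) := by
              apply mul_le_mul_of_nonneg_left hMa (le_of_lt hε)
            linarith
      _ = ε * (M c - M a) + δ := by ring
    -- c = b
    have hcb' : c = b := by
      by_contra hne
      have hclt : c < b := lt_of_le_of_ne hcb hne
      have hη : (0:ℝ) < ε / (K + 1) := by positivity
      obtain ⟨γ, hγ, hγ'⟩ := Metric.continuousWithinAt_iff.1 (hMc c hcIcc) _ hη
      set y := min (c + γ / 2) b with hy
      have hcy : c < y := by
        apply lt_min (by linarith) hclt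
      have hyb : y ≤ b := min_le_right _ _
      have hyIcc : y ∈ Set.Icc a b := ⟨by linarith, hyb⟩
      have hdist : dist y c < γ := by
        rw [Real.dist_eq, abs_lt]
        constructor
        · linarith [min_le_right (c + γ / 2) b]
        · have : y ≤ c + γ / 2 := min_le_left _ _
          linarith
      have hMyc : |M y - M c| < ε / (K + 1) := by
        have := hγ' hyIcc hdist
        rwa [Real.dist_eq] at this
      have hMmono : M c ≤ M y := hMm c y hac (le_of_lt hcy) hyb
      have h1 : |h y - h c| ≤ K * (M y - M c) ^ 2 := hbound c y hac (le_of_lt hcy) hyb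
      have h2 : K * (M y - M c) ^ 2 ≤ ε * (M y - M c) := by
        have hd : M y - M c < ε / (K + 1) := by
          calc M y - M c ≤ |M y - M c| := le_abs_self _
          _ < _ := hMyc
        have : K * (M y - M c) ≤ ε := by
          calc K * (M y - M c) ≤ K * (ε / (K + 1)) := by
                apply mul_le_mul_of_nonneg_left (le_of_lt hd) hK
          _ ≤ ε := by
                rw [div_eq_mul_inv, ← mul_assoc]
                have h3 : K * ε ≤ (K + 1) * ε := by nlinarith
                calc K * ε * (K + 1)⁻¹ ≤ (K + 1) * ε * (K + 1)⁻¹ := by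
                      apply mul_le_mul_of_nonneg_right h3; positivity
                _ = ε := by field_simp
        calc K * (M y - M c) ^ 2 = (K * (M y - M c)) * (M y - M c) := by ring
        _ ≤ ε * (M y - M c) := by
              apply mul_le_mul_of_nonneg_right this (by linarith)
      have hyS : y ∈ S := by
        refine ⟨hyIcc, ?_⟩
        calc |h y - h a| ≤ |h y - h c| + |h c - h a| := by
              have heq : h y - h a = (h y - h c) + (h c - h a) := by ring
              rw [heq]; exact abs_add_le _ _
        _ ≤ ε * (M y - M c) + ε * (M c - M a) := by
              refine add_le_add (le_trans h1 h2) hcS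
        _ = ε * (M y - M a) := by ring
      have : y ≤ c := le_csSup hSbdd hyS
      linarith
    rw [← hcb']
    exact hcS
  -- conclude
  have hMab : 0 ≤ M b - M a := by
    have := hMm a b le_rfl hab le_rfl; linarith
  by_contra hne
  have habs : 0 < |h b - h a| := by
    rw [abs_pos]; intro h0; apply hne; linarith [abs_nonneg (h b - h a)]
  have hε : 0 < |h b - h a| / (2 * (M b - M a + 1)) := by positivity
  have hkey := key _ hε
  rw [div_mul_eq_mul_div, le_div_iff₀ (by positivity)] at hkey
  nlinarith

set_option maxHeartbeats 4000000 in
/-- For each fixed t > 0 and all 0 < u, v ≤ t, one has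
f(u)ᵀ·α_t·f(v) = ∫_t^∞ k(r,u)·k(r,v) dr + f(u)ᵀ·α_∞·f(v), where the improper integral
converges. In particular the kernel system κ_t(u,v) := f(u)ᵀ·α_t·f(v) satisfies
k(t,s) = κ_t(t,s) for all 0 < s ≤ t < ∞. -/
theorem kernel_system_representation
    (n : ℕ) (hn : 1 ≤ n)
    (f : ℝ → Fin n → ℝ)
    (hf_meas : ∀ i, Measurable fun s => f s i)
    (hf_loc : ∀ i, ∀ t > (0 : ℝ), IntegrableOn (fun s => (f s i) ^ 2) (Set.Ioc 0 t))
    (m : ℝ → Matrix (Fin n) (Fin n) ℝ)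
    (hm : ∀ t, m t = Matrix.of fun i j => ∫ s in Set.Ioc 0 t, f s i * f s j)
    (hm_inv : ∀ t > (0 : ℝ), IsUnit (m t))
    (α : ℝ → Matrix (Fin n) (Fin n) ℝ)
    (hα : ∀ t, α t = (m t)⁻¹)
    (φ : ℝ → Fin n → ℝ)
    (hφ : ∀ t, φ t = (α t).mulVec (f t))
    (k : ℝ → ℝ → ℝ)
    (hk : ∀ s t : ℝ, 0 < s → s ≤ t → k t s = φ t ⬝ᵥ f s)
    (A : Matrix (Fin n) (Fin n) ℝ)
    (hA : ∀ i j, Tendsto (fun r => α r i j) atTop (𝓝 (A i j)))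
    (κ : ℝ → ℝ → ℝ → ℝ)
    (hκ : ∀ t u v : ℝ, κ t u v = f u ⬝ᵥ (α t).mulVec (f v)) :
    (∀ t > (0 : ℝ), ∀ u v : ℝ, 0 < u → u ≤ t → 0 < v → v ≤ t →
      IntegrableOn (fun r => k r u * k r v) (Set.Ioi t) ∧
      κ t u v = (∫ r in Set.Ioi t, k r u * k r v) + f u ⬝ᵥ A.mulVec (f v)) ∧
    (∀ s t : ℝ, 0 < s → s ≤ t → k t s = κ t t s) := by
  classical
  have hbound : ∀ (s : ℝ) (i j : Fin n), |f s i * f s j| ≤ ∑ l, f s l ^ 2 := by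
    intro s i j
    have h1 : |f s i * f s j| ≤ (f s i ^ 2 + f s j ^ 2) / 2 := by
      rw [abs_mul]
      nlinarith [sq_nonneg (|f s i| - |f s j|), sq_abs (f s i), sq_abs (f s j),
        abs_nonneg (f s i), abs_nonneg (f s j)]
    by_cases hij : i = j
    · subst hij
      refine h1.trans ?_
      have := Finset.single_le_sum (f := fun l => f s l ^ 2)
        (fun l _ => sq_nonneg _) (Finset.mem_univ i)
      linarith
    · refine h1.trans ?_
      have h2 : f s i ^ 2 + f s j ^ 2 ≤ ∑ l, f s l ^ 2 := by
        have := Finset.sum_le_sum_of_subset_of_nonneg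
          (s := {i, j}) (t := Finset.univ)
          (by intro x _; exact Finset.mem_univ x)
          (fun l _ _ => sq_nonneg (f s l))
        rwa [Finset.sum_pair hij] at this
      nlinarith [sq_nonneg (f s i), sq_nonneg (f s j)]
  have hS_int : ∀ b > (0:ℝ), IntegrableOn (fun s => ∑ l, f s l ^ 2) (Set.Ioc 0 b) :=
    fun b hb => integrable_finset_sum _ (fun i _ => hf_loc i b hb)
  have hprod_int : ∀ (a b : ℝ), 0 ≤ a → ∀ i j,
      IntegrableOn (fun s => f s i * f s j) (Set.Ioc a b) := by
    intro a b ha i j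
    by_cases hb : 0 < b
    · have hsub : Set.Ioc a b ⊆ Set.Ioc 0 b := Set.Ioc_subset_Ioc_left ha
      refine Integrable.mono' ((hS_int b hb).mono_set hsub) ?_ ?_
      · exact ((hf_meas i).mul (hf_meas j)).aestronglyMeasurable
      · exact Filter.Eventually.of_forall (fun s => by
          rw [Real.norm_eq_abs]; exact hbound s i j)
    · have : Set.Ioc a b = ∅ := by
        apply Set.Ioc_eq_empty
        intro h; push_neg at hb; exact absurd (lt_of_le_of_lt ha h) (by linarith)
      rw [this]; exact integrableOn_empty
  -- bilinear integral swap
  have hbil : ∀ (x y : Fin n → ℝ) (a b : ℝ), 0 ≤ a →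
      x ⬝ᵥ (Matrix.of fun i j => ∫ s in Set.Ioc a b, f s i * f s j) *ᵥ y
        = ∫ s in Set.Ioc a b, (x ⬝ᵥ f s) * (y ⬝ᵥ f s) := by
    intro x y a b ha
    have hint : ∀ i j : Fin n,
        IntegrableOn (fun s => (x i * y j) * (f s i * f s j)) (Set.Ioc a b) :=
      fun i j => (hprod_int a b ha i j).const_mul _
    simp only [dotProduct, Matrix.mulVec, Matrix.of_apply]
    calc ∑ i, x i * ∑ j, (∫ s in Set.Ioc a b, f s i * f s j) * y j
        = ∑ i, ∑ j, ∫ s in Set.Ioc a b, (x i * y j) * (f s i * f s j) := by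
          refine Finset.sum_congr rfl fun i _ => ?_
          rw [Finset.mul_sum]
          refine Finset.sum_congr rfl fun j _ => ?_
          rw [show x i * ((∫ s in Set.Ioc a b, f s i * f s j) * y j)
              = (x i * y j) * ∫ s in Set.Ioc a b, f s i * f s j by ring,
            ← integral_const_mul]
      _ = ∫ s in Set.Ioc a b, ∑ i, ∑ j, (x i * y j) * (f s i * f s j) := by
          rw [integral_finset_sum _ (fun i _ => integrable_finset_sum _ (fun j _ => hint i j))]
          refine Finset.sum_congr rfl fun i _ => ?_
          rw [integral_finset_sum _ (fun j _ => hint i j)]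
      _ = ∫ s in Set.Ioc a b, (∑ i, x i * f s i) * (∑ j, y j * f s j) := by
          have hptw : ∀ s : ℝ, ∑ i, ∑ j, (x i * y j) * (f s i * f s j)
              = (∑ i, x i * f s i) * (∑ j, y j * f s j) := by
            intro s
            rw [Finset.sum_mul_sum]
            refine Finset.sum_congr rfl fun i _ => Finset.sum_congr rfl fun j _ => by ring
          simp_rw [hptw]
  -- m increment
  have hm_add : ∀ a b : ℝ, 0 ≤ a → a ≤ b →
      m b = m a + Matrix.of (fun i j => ∫ s in Set.Ioc a b, f s i * f s j) := by
    intro a b ha hab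
    ext i j
    simp only [hm, Matrix.add_apply, Matrix.of_apply]
    rw [← setIntegral_union ((Set.Ioc_disjoint_Ioc_of_le le_rfl)) measurableSet_Ioc
      (hprod_int 0 a le_rfl i j) (hprod_int a b ha i j),
      Set.Ioc_union_Ioc_eq_Ioc ha hab]
  -- resolvent identity
  have hres : ∀ a b : ℝ, 0 < a → a ≤ b →
      α a - α b = α a * (Matrix.of fun i j => ∫ s in Set.Ioc a b, f s i * f s j) * α b := by
    intro a b ha hab
    have h1 : α a * m a = 1 := by
      rw [hα]
      exact Matrix.nonsing_inv_mul _ ((Matrix.isUnit_iff_isUnit_det _).1 (hm_inv a ha))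
    have h2 : m b * α b = 1 := by
      rw [hα]
      exact Matrix.mul_nonsing_inv _
        ((Matrix.isUnit_iff_isUnit_det _).1 (hm_inv b (lt_of_lt_of_le ha hab)))
    have hΔ : Matrix.of (fun i j => ∫ s in Set.Ioc a b, f s i * f s j) = m b - m a := by
      rw [hm_add a b (le_of_lt ha) hab, add_sub_cancel_left]
    rw [hΔ, Matrix.mul_sub, Matrix.sub_mul, mul_assoc, h2, mul_one, mul_assoc,
      ← mul_assoc (α a) (m a) (α b), h1, one_mul]
  -- symmetry
  have hm_symm : ∀ r, (m r)ᵀ = m r := by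
    intro r
    rw [hm]
    ext i j
    simp only [Matrix.transpose_apply, Matrix.of_apply]
    simp_rw [mul_comm]
  have hα_symm : ∀ r, (α r)ᵀ = α r := by
    intro r
    rw [hα, Matrix.transpose_nonsing_inv, hm_symm]
  have hsymdot : ∀ (B : Matrix (Fin n) (Fin n) ℝ), Bᵀ = B →
      ∀ x y : Fin n → ℝ, (B *ᵥ x) ⬝ᵥ y = (B *ᵥ y) ⬝ᵥ x := by
    intro B hB x y
    rw [dotProduct_comm, Matrix.dotProduct_mulVec, ← Matrix.mulVec_transpose, hB]
  -- key identity
  have key5 : ∀ a b : ℝ, 0 < a → a ≤ b → ∀ x y : Fin n → ℝ,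
      x ⬝ᵥ (α a) *ᵥ y - x ⬝ᵥ (α b) *ᵥ y
        = ∫ s in Set.Ioc a b, ((α a *ᵥ x) ⬝ᵥ f s) * ((α b *ᵥ y) ⬝ᵥ f s) := by
    intro a b ha hab x y
    have hb : (0:ℝ) < b := lt_of_lt_of_le ha hab
    calc x ⬝ᵥ (α a) *ᵥ y - x ⬝ᵥ (α b) *ᵥ y
        = x ⬝ᵥ ((α a - α b) *ᵥ y) := by rw [Matrix.sub_mulVec, dotProduct_sub]
      _ = x ⬝ᵥ ((α a * (Matrix.of fun i j => ∫ s in Set.Ioc a b, f s i * f s j) * α b) *ᵥ y) := by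
          rw [← hres a b ha hab]
      _ = (α a *ᵥ x) ⬝ᵥ ((Matrix.of fun i j => ∫ s in Set.Ioc a b, f s i * f s j) *ᵥ (α b *ᵥ y)) := by
          rw [← Matrix.mulVec_mulVec, ← Matrix.mulVec_mulVec]
          rw [dotProduct_comm, hsymdot (α a) (hα_symm a)]
      _ = ∫ s in Set.Ioc a b, ((α a *ᵥ x) ⬝ᵥ f s) * ((α b *ᵥ y) ⬝ᵥ f s) := by
          rw [hbil _ _ a b (le_of_lt ha)]
  have hk' : ∀ (w r : ℝ), 0 < w → w ≤ r → k r w = α r *ᵥ f r ⬝ᵥ f w := by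
    intro w r hw hwr
    rw [hk w r hw hwr, hφ r]
  have habs2 : ∀ a b : ℝ, |a * b| ≤ (a * a + b * b) / 2 := by
    intro a b
    rw [abs_mul]
    nlinarith [sq_nonneg (|a| - |b|), abs_nonneg a, abs_nonneg b,
      abs_mul_abs_self a, abs_mul_abs_self b]
  -- positivity of the quadratic form of α
  have hpos : ∀ T > (0:ℝ), ∀ z : Fin n → ℝ, 0 ≤ z ⬝ᵥ α T *ᵥ z := by
    intro T hT0 z
    have h2 : m T * α T = 1 := by
      rw [hα]
      exact Matrix.mul_nonsing_inv _ ((Matrix.isUnit_iff_isUnit_det _).1 (hm_inv T hT0))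
    have hz : z = m T *ᵥ (α T *ᵥ z) := by
      rw [Matrix.mulVec_mulVec, h2, Matrix.one_mulVec]
    have hcalc : z ⬝ᵥ α T *ᵥ z
        = ∫ s in Set.Ioc 0 T, ((α T *ᵥ z) ⬝ᵥ f s) * ((α T *ᵥ z) ⬝ᵥ f s) := by
      calc z ⬝ᵥ α T *ᵥ z = (m T *ᵥ (α T *ᵥ z)) ⬝ᵥ (α T *ᵥ z) := by
            nth_rewrite 1 [hz]; rfl
        _ = (α T *ᵥ z) ⬝ᵥ (m T *ᵥ (α T *ᵥ z)) := dotProduct_comm _ _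
        _ = ∫ s in Set.Ioc 0 T, ((α T *ᵥ z) ⬝ᵥ f s) * ((α T *ᵥ z) ⬝ᵥ f s) := by
            rw [hm T]
            exact hbil _ _ 0 T le_rfl
    rw [hcalc]
    exact setIntegral_nonneg measurableSet_Ioc (fun s _ => mul_self_nonneg _)
  constructor
  · -- main statement
    intro t ht u v hu hut hv hvt
    have hS_int_loc : ∀ c d : ℝ, t ≤ c →
        IntegrableOn (fun s => ∑ l, f s l ^ 2) (Set.Ioc c d) := by
      intro c d htc
      rcases lt_or_ge c d with h | h
      · exact (hS_int d (by linarith)).mono_set (Set.Ioc_subset_Ioc_left (by linarith))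
      · rw [Set.Ioc_eq_empty (not_lt.2 h)]; exact integrableOn_empty
    have hSsplit : ∀ (g : ℝ → ℝ), ∀ a b : ℝ, t ≤ a → a ≤ b →
        IntegrableOn g (Set.Ioc t a) → IntegrableOn g (Set.Ioc a b) →
        (∫ s in Set.Ioc t b, g s) = (∫ s in Set.Ioc t a, g s) + ∫ s in Set.Ioc a b, g s := by
      intro g a b hta hab h1 h2
      rw [← Set.Ioc_union_Ioc_eq_Ioc hta hab,
        setIntegral_union (Set.Ioc_disjoint_Ioc_of_le le_rfl) measurableSet_Ioc h1 h2]
    -- the key identity and integrability, for every horizon T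
    have hstar : ∀ T : ℝ, t ≤ T → ∀ u v : ℝ, 0 < u → u ≤ t → 0 < v → v ≤ t →
        IntegrableOn (fun r => k r u * k r v) (Set.Ioc t T) ∧
        ((f u) ⬝ᵥ (α T) *ᵥ (f v)) + (∫ r in Set.Ioc t T, k r u * k r v)
          = (f u) ⬝ᵥ (α t) *ᵥ (f v) := by
      intro T hT
      have hT0 : (0:ℝ) < T := lt_of_lt_of_le ht hT
      -- continuity of m
      have hm_cont : ContinuousOn m (Set.Icc 0 T) := by
        refine continuousOn_pi.2 ?_
        intro i
        rw [continuousOn_pi]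
        intro j
        have : ContinuousOn (fun r => ∫ s in Set.Ioc 0 r, f s i * f s j) (Set.Icc 0 T) :=
          intervalIntegral.continuousOn_primitive ((integrableOn_Icc_iff_integrableOn_Ioc enorm_ne_top).2 (hprod_int 0 T le_rfl i j))
        refine this.congr ?_
        intro r _
        simp only [hm, Matrix.of_apply]
      -- continuity of α on Icc t T
      have hα_cont : ContinuousOn α (Set.Icc t T) := by
        have hsub : Set.Icc t T ⊆ Set.Icc 0 T := Set.Icc_subset_Icc_left (le_of_lt ht)
        have hdet : ContinuousOn (fun r => (m r).det) (Set.Icc t T) :=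
          (continuous_id.matrix_det).comp_continuousOn (hm_cont.mono hsub)
        have hadj : ContinuousOn (fun r => (m r).adjugate) (Set.Icc t T) :=
          (continuous_id.matrix_adjugate).comp_continuousOn (hm_cont.mono hsub)
        have hdet_ne : ∀ r ∈ Set.Icc t T, (m r).det ≠ 0 := by
          intro r hr
          exact IsUnit.ne_zero ((Matrix.isUnit_iff_isUnit_det _).1
            (hm_inv r (lt_of_lt_of_le ht hr.1)))
        have : ContinuousOn (fun r => ((m r).det)⁻¹ • (m r).adjugate) (Set.Icc t T) :=
          (hdet.inv₀ hdet_ne).smul hadj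
        refine this.congr ?_
        intro r hr
        rw [hα, Matrix.inv_def, Ring.inverse_eq_inv']
      have hα_entry_cont : ∀ i j, ContinuousOn (fun r => α r i j) (Set.Icc t T) := by
        intro i j
        exact ((continuous_apply j).comp (continuous_apply i)).comp_continuousOn hα_cont
      -- entrywise bound
      obtain ⟨C, hC0, hC⟩ : ∃ C : ℝ, 0 ≤ C ∧ ∀ r ∈ Set.Icc t T, ∀ i j, |α r i j| ≤ C := by
        have hg : ContinuousOn (fun r => ∑ i, ∑ j, |α r i j|) (Set.Icc t T) := by
          refine continuousOn_finset_sum _ fun i _ => continuousOn_finset_sum _ fun j _ => ?_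
          exact (hα_entry_cont i j).abs
        obtain ⟨C, hC⟩ := (isCompact_Icc).exists_bound_of_continuousOn hg
        refine ⟨max C 0, le_max_right _ _, ?_⟩
        intro r hr i j
        have h1 : |α r i j| ≤ ∑ i, ∑ j, |α r i j| := by
          calc |α r i j| ≤ ∑ j', |α r i j'| :=
                Finset.single_le_sum (f := fun j' => |α r i j'|)
                  (fun _ _ => abs_nonneg _) (Finset.mem_univ j)
            _ ≤ ∑ i', ∑ j', |α r i' j'| :=
                Finset.single_le_sum (f := fun i' => ∑ j', |α r i' j'|)
                  (fun _ _ => Finset.sum_nonneg fun _ _ => abs_nonneg _) (Finset.mem_univ i)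
        have h2 := hC r hr
        rw [Real.norm_eq_abs] at h2
        have h3 : ∑ i, ∑ j, |α r i j| ≤ C := le_trans (le_abs_self _) h2
        exact le_trans h1 (le_trans h3 (le_max_left _ _))
      -- the M function
      set M : ℝ → ℝ := fun x => ∫ s in Set.Ioc t x, ∑ l, f s l ^ 2 with hM
      have hM_cont : ContinuousOn M (Set.Icc t T) :=
        intervalIntegral.continuousOn_primitive
          ((hS_int T hT0).mono_set (fun x hx => ⟨lt_of_lt_of_le ht hx.1, hx.2⟩))
      have hM_diff : ∀ a b : ℝ, t ≤ a → a ≤ b →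
          M b - M a = ∫ s in Set.Ioc a b, ∑ l, f s l ^ 2 := by
        intro a b hta hab
        have hint : ∀ c d : ℝ, t ≤ c → IntegrableOn (fun s => ∑ l, f s l ^ 2) (Set.Ioc c d) := by
          intro c d htc
          rcases lt_or_ge c d with h | h
          · exact (hS_int d (by linarith)).mono_set (Set.Ioc_subset_Ioc_left (by linarith))
          · rw [Set.Ioc_eq_empty (not_lt.2 h)]; exact integrableOn_empty
        have hU : Set.Ioc t a ∪ Set.Ioc a b = Set.Ioc t b := Set.Ioc_union_Ioc_eq_Ioc hta hab
        have hsum := setIntegral_union (f := fun s => ∑ l, f s l ^ 2) (μ := volume)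
          ((Set.Ioc_disjoint_Ioc_of_le le_rfl)) measurableSet_Ioc (hint t a le_rfl) (hint a b hta)
        have h2 : M b = M a + ∫ s in Set.Ioc a b, ∑ l, f s l ^ 2 := by
          show (∫ s in Set.Ioc t b, ∑ l, f s l ^ 2)
            = (∫ s in Set.Ioc t a, ∑ l, f s l ^ 2) + ∫ s in Set.Ioc a b, ∑ l, f s l ^ 2
          rw [← hU]
          exact hsum
        linarith
      have hM_mono : ∀ x y, t ≤ x → x ≤ y → y ≤ T → M x ≤ M y := by
        intro x y htx hxy _
        have := hM_diff x y htx hxy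
        have hpos : 0 ≤ ∫ s in Set.Ioc x y, ∑ l, f s l ^ 2 :=
          setIntegral_nonneg measurableSet_Ioc
            (fun s _ => Finset.sum_nonneg fun l _ => sq_nonneg _)
        linarith
      intro u v hu hut hv hvt
      classical
      set x := f u with hx
      set y := f v with hy
      set U : ℝ := ∑ p, |x p| with hU
      set V : ℝ := ∑ p, |y p| with hV
      have hU0 : 0 ≤ U := Finset.sum_nonneg fun _ _ => abs_nonneg _
      have hV0 : 0 ≤ V := Finset.sum_nonneg fun _ _ => abs_nonneg _
      set F : ℝ → ℝ := fun r => ∑ i, |f r i| with hF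
      have hF0 : ∀ r, 0 ≤ F r := fun r => Finset.sum_nonneg fun _ _ => abs_nonneg _
      have hFsq : ∀ r, F r ^ 2 ≤ (n : ℝ) * ∑ l, f r l ^ 2 := by
        intro r
        have := sq_sum_le_card_mul_sum_sq (s := (Finset.univ : Finset (Fin n)))
          (f := fun i => |f r i|)
        simp only [Finset.card_univ, Fintype.card_fin, sq_abs] at this
        exact_mod_cast this
      -- generic dot-product bound
      have hdot_le : ∀ (B : Matrix (Fin n) (Fin n) ℝ) (D : ℝ), 0 ≤ D →
          (∀ i j, |B i j| ≤ D) → ∀ (z : Fin n → ℝ) (r : ℝ),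
          |(B *ᵥ z) ⬝ᵥ f r| ≤ D * (∑ p, |z p|) * F r := by
        intro B D hD0 hBD z r
        calc |(B *ᵥ z) ⬝ᵥ f r| = |∑ i, (∑ j, B i j * z j) * f r i| := rfl
          _ ≤ ∑ i, |(∑ j, B i j * z j) * f r i| := Finset.abs_sum_le_sum_abs _ _
          _ ≤ ∑ i, (D * ∑ p, |z p|) * |f r i| := by
              refine Finset.sum_le_sum fun i _ => ?_
              rw [abs_mul]
              refine mul_le_mul_of_nonneg_right ?_ (abs_nonneg _)
              calc |∑ j, B i j * z j| ≤ ∑ j, |B i j * z j| := Finset.abs_sum_le_sum_abs _ _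
                _ ≤ ∑ j, D * |z j| := by
                    refine Finset.sum_le_sum fun j _ => ?_
                    rw [abs_mul]
                    exact mul_le_mul_of_nonneg_right (hBD i j) (abs_nonneg _)
                _ = D * ∑ p, |z p| := by rw [Finset.mul_sum]
          _ = D * (∑ p, |z p|) * F r := by rw [hF, ← Finset.mul_sum]
      -- entry bound on differences of α
      have hαdiff : ∀ a c : ℝ, t ≤ a → a ≤ c → c ≤ T → ∀ i j,
          |(α a - α c) i j| ≤ (n:ℝ)^2 * C^2 * (M c - M a) := by
        intro a c hta hac hcT i j
        have ha0 : (0:ℝ) < a := lt_of_lt_of_le ht hta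
        have hMca : M c - M a = ∫ s in Set.Ioc a c, ∑ l, f s l ^ 2 := hM_diff a c hta hac
        have hΔ : ∀ p q, |(Matrix.of fun i j => ∫ s in Set.Ioc a c, f s i * f s j) p q|
            ≤ M c - M a := by
          intro p q
          rw [hMca]
          simp only [Matrix.of_apply]
          calc |∫ s in Set.Ioc a c, f s p * f s q|
              ≤ ∫ s in Set.Ioc a c, |f s p| * |f s q| := by
                have := norm_integral_le_integral_norm (μ := volume.restrict (Set.Ioc a c))
                  (f := fun s => f s p * f s q)
                simpa [Real.norm_eq_abs, abs_mul] using this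
            _ ≤ ∫ s in Set.Ioc a c, ∑ l, f s l ^ 2 := by
                refine integral_mono ?_ ?_ ?_
                · simp_rw [← abs_mul]
                  exact (hprod_int a c (le_of_lt ha0) p q).abs
                · exact hS_int_loc a c hta
                · intro s
                  exact le_trans (le_of_eq (abs_mul _ _).symm) (hbound s p q)
        rw [hres a c ha0 hac]
        rw [Matrix.mul_apply]
        calc |∑ l, (α a * Matrix.of fun i j => ∫ s in Set.Ioc a c, f s i * f s j) i l * α c l j|
            ≤ ∑ l, |(α a * Matrix.of fun i j => ∫ s in Set.Ioc a c, f s i * f s j) i l * α c l j| :=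
              Finset.abs_sum_le_sum_abs _ _
          _ ≤ ∑ _l : Fin n, ((n:ℝ) * (C * (M c - M a))) * C := by
              refine Finset.sum_le_sum fun l _ => ?_
              rw [abs_mul]
              have hMcMa : 0 ≤ M c - M a := by
                have := hM_mono a c hta hac hcT; linarith
              refine mul_le_mul ?_ (hC c ⟨le_trans hta hac, hcT⟩ l j) (abs_nonneg _) ?_
              · rw [Matrix.mul_apply]
                calc |∑ p, α a i p * (Matrix.of fun i j => ∫ s in Set.Ioc a c, f s i * f s j) p l|
                    ≤ ∑ p, |α a i p * (Matrix.of fun i j => ∫ s in Set.Ioc a c, f s i * f s j) p l| :=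
                      Finset.abs_sum_le_sum_abs _ _
                  _ ≤ ∑ _p : Fin n, C * (M c - M a) := by
                      refine Finset.sum_le_sum fun p _ => ?_
                      rw [abs_mul]
                      exact mul_le_mul (hC a ⟨hta, le_trans hac hcT⟩ i p) (hΔ p l)
                        (abs_nonneg _) hC0
                  _ = (n:ℝ) * (C * (M c - M a)) := by
                      rw [Finset.sum_const, Finset.card_univ, Fintype.card_fin, nsmul_eq_mul]
              · exact mul_nonneg (Nat.cast_nonneg n) (mul_nonneg hC0 hMcMa)
          _ = (n:ℝ)^2 * C^2 * (M c - M a) := by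
              rw [Finset.sum_const, Finset.card_univ, Fintype.card_fin, nsmul_eq_mul]
              ring
      -- second dot bound
      have hdot_le' : ∀ (P : Fin n → ℝ) (r : ℝ), |P ⬝ᵥ f r| ≤ (∑ p, |P p|) * F r := by
        intro P r
        calc |P ⬝ᵥ f r| ≤ ∑ i, |P i * f r i| := Finset.abs_sum_le_sum_abs _ _
          _ ≤ ∑ i, (∑ p, |P p|) * |f r i| := by
              refine Finset.sum_le_sum fun i _ => ?_
              rw [abs_mul]
              refine mul_le_mul_of_nonneg_right ?_ (abs_nonneg _)
              exact Finset.single_le_sum (f := fun p => |P p|) (fun _ _ => abs_nonneg _)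
                (Finset.mem_univ i)
          _ = (∑ p, |P p|) * F r := by rw [hF, ← Finset.mul_sum]
      -- measurability of k on (t, T]
      have hk_meas : ∀ w : ℝ, 0 < w → w ≤ t →
          AEStronglyMeasurable (fun r => k r w) (volume.restrict (Set.Ioc t T)) := by
        intro w hw hwt
        have hg : AEMeasurable (fun r => ∑ i, (∑ j, α r i j * f r j) * f w i)
            (volume.restrict (Set.Ioc t T)) := by
          refine Finset.aemeasurable_fun_sum _ fun i _ => ?_
          refine (Finset.aemeasurable_fun_sum _ fun j _ => ?_).mul_const _
          exact (((hα_entry_cont i j).mono Set.Ioc_subset_Icc_self).aemeasurable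
            measurableSet_Ioc).mul (hf_meas j).aemeasurable.restrict
        refine (hg.congr ?_).aestronglyMeasurable
        filter_upwards [ae_restrict_mem measurableSet_Ioc] with r hr
        rw [hk' w r hw (le_trans hwt (le_of_lt hr.1))]
        simp [dotProduct, Matrix.mulVec]
      -- integrability of products of k
      have hkprod_int : ∀ w w' : ℝ, 0 < w → w ≤ t → 0 < w' → w' ≤ t → ∀ a b : ℝ, t ≤ a → b ≤ T →
          IntegrableOn (fun r => k r w * k r w') (Set.Ioc a b) := by
        intro w w' hw hwt hw' hw't a b hta hbT
        have hsub : Set.Ioc a b ⊆ Set.Ioc t T := Set.Ioc_subset_Ioc hta hbT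
        have hle : volume.restrict (Set.Ioc a b) ≤ volume.restrict (Set.Ioc t T) :=
          Measure.restrict_mono hsub le_rfl
        set W : ℝ := ∑ p, |f w p| with hW
        set W' : ℝ := ∑ p, |f w' p| with hW'
        have hW0 : 0 ≤ W := Finset.sum_nonneg fun _ _ => abs_nonneg _
        have hW'0 : 0 ≤ W' := Finset.sum_nonneg fun _ _ => abs_nonneg _
        refine Integrable.mono' (g := fun r => (C^2 * W * W' * n) * ∑ l, f r l ^ 2)
          ((hS_int_loc a b hta).const_mul _)
          (((hk_meas w hw hwt).mono_measure hle).mul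
            ((hk_meas w' hw' hw't).mono_measure hle)) ?_
        filter_upwards [ae_restrict_mem measurableSet_Ioc] with r hr
        have hrT : r ∈ Set.Icc t T := ⟨le_of_lt (lt_of_le_of_lt hta hr.1), le_trans hr.2 hbT⟩
        rw [Real.norm_eq_abs, abs_mul, hk' w r hw (le_trans hwt hrT.1),
          hk' w' r hw' (le_trans hw't hrT.1), hsymdot (α r) (hα_symm r) (f r) (f w),
          hsymdot (α r) (hα_symm r) (f r) (f w')]
        have h1 : |(α r *ᵥ f w) ⬝ᵥ f r| ≤ C * W * F r := hdot_le (α r) C hC0 (hC r hrT) (f w) r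
        have h2 : |(α r *ᵥ f w') ⬝ᵥ f r| ≤ C * W' * F r := hdot_le (α r) C hC0 (hC r hrT) (f w') r
        calc |(α r *ᵥ f w) ⬝ᵥ f r| * |(α r *ᵥ f w') ⬝ᵥ f r|
            ≤ (C * W * F r) * (C * W' * F r) :=
              mul_le_mul h1 h2 (abs_nonneg _) (by positivity)
          _ = (C^2 * W * W') * F r ^ 2 := by ring
          _ ≤ (C^2 * W * W') * ((n:ℝ) * ∑ l, f r l ^ 2) :=
              mul_le_mul_of_nonneg_left (hFsq r) (by positivity)
          _ = (C^2 * W * W' * n) * ∑ l, f r l ^ 2 := by ring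
      -- integrability of fixed-coefficient products
      have hPQ_int : ∀ (P Q : Fin n → ℝ) (a b : ℝ), t ≤ a →
          IntegrableOn (fun r => (P ⬝ᵥ f r) * (Q ⬝ᵥ f r)) (Set.Ioc a b) := by
        intro P Q a b hta
        have hmeas : AEStronglyMeasurable (fun r => (P ⬝ᵥ f r) * (Q ⬝ᵥ f r))
            (volume.restrict (Set.Ioc a b)) := by
          refine (Measurable.mul ?_ ?_).aestronglyMeasurable <;>
            exact Finset.measurable_sum _ fun i _ => (hf_meas i).const_mul _
        refine Integrable.mono' (g := fun r => ((∑ p, |P p|) * (∑ p, |Q p|) * n) * ∑ l, f r l ^ 2)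
          ((hS_int_loc a b hta).const_mul _) hmeas ?_
        refine Filter.Eventually.of_forall fun r => ?_
        rw [Real.norm_eq_abs, abs_mul]
        have h1 := hdot_le' P r
        have h2 := hdot_le' Q r
        have hP0 : (0:ℝ) ≤ ∑ p, |P p| := Finset.sum_nonneg fun _ _ => abs_nonneg _
        have hQ0 : (0:ℝ) ≤ ∑ p, |Q p| := Finset.sum_nonneg fun _ _ => abs_nonneg _
        calc |P ⬝ᵥ f r| * |Q ⬝ᵥ f r| ≤ ((∑ p, |P p|) * F r) * ((∑ p, |Q p|) * F r) :=
              mul_le_mul h1 h2 (abs_nonneg _) (by positivity)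
          _ = ((∑ p, |P p|) * (∑ p, |Q p|)) * F r ^ 2 := by ring
          _ ≤ ((∑ p, |P p|) * (∑ p, |Q p|)) * ((n:ℝ) * ∑ l, f r l ^ 2) :=
              mul_le_mul_of_nonneg_left (hFsq r) (by positivity)
          _ = ((∑ p, |P p|) * (∑ p, |Q p|) * n) * ∑ l, f r l ^ 2 := by ring
      -- the function H
      set H : ℝ → ℝ := fun w => x ⬝ᵥ α w *ᵥ y + ∫ r in Set.Ioc t w, k r u * k r v with hH
      -- increment formula
      have hIncr : ∀ a b : ℝ, t ≤ a → a ≤ b → b ≤ T →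
          H b - H a = ∫ r in Set.Ioc a b,
            (k r u * k r v - ((α a *ᵥ x) ⬝ᵥ f r) * ((α b *ᵥ y) ⬝ᵥ f r)) := by
        intro a b hta hab hbT
        have hsplit := hSsplit (fun r => k r u * k r v) a b hta hab
          (hkprod_int u v hu hut hv hvt t a le_rfl (le_trans hab hbT))
          (hkprod_int u v hu hut hv hvt a b hta hbT)
        have h5 := key5 a b (lt_of_lt_of_le ht hta) hab x y
        have hsub := integral_sub (hkprod_int u v hu hut hv hvt a b hta hbT)
          (hPQ_int (α a *ᵥ x) (α b *ᵥ y) a b hta)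
        rw [hH]
        simp only []
        rw [hsplit, hsub]
        have : ∀ s : ℝ, (α a *ᵥ x ⬝ᵥ f s) * (α b *ᵥ y ⬝ᵥ f s)
            = ((fun r => α a *ᵥ x ⬝ᵥ f r) s) * ((fun r => α b *ᵥ y ⬝ᵥ f r) s) := fun s => rfl
        linarith [h5]
      -- pointwise bound of the increment integrand
      set K : ℝ := (n:ℝ)^3 * C^3 * U * V with hK
      have hK0 : 0 ≤ K := by positivity
      have hHbound : ∀ a b : ℝ, t ≤ a → a ≤ b → b ≤ T →
          |H b - H a| ≤ K * (M b - M a)^2 := by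
        intro a b hta hab hbT
        have hMab : 0 ≤ M b - M a := by have := hM_mono a b hta hab hbT; linarith
        rw [hIncr a b hta hab hbT]
        have hbnd : ∀ r ∈ Set.Ioc a b,
            |k r u * k r v - ((α a *ᵥ x) ⬝ᵥ f r) * ((α b *ᵥ y) ⬝ᵥ f r)|
              ≤ ((n:ℝ)^3 * C^3 * U * V * (M b - M a)) * ∑ l, f r l ^ 2 := by
          intro r hr
          have hrT : r ∈ Set.Icc t T := ⟨le_of_lt (lt_of_le_of_lt hta hr.1), le_trans hr.2 hbT⟩
          have hMar : 0 ≤ M r - M a := by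
            have := hM_mono a r hta (le_of_lt hr.1) hrT.2; linarith
          have hMrb : 0 ≤ M b - M r := by
            have := hM_mono r b hrT.1 hr.2 hbT; linarith
          rw [hk' u r hu (le_trans hut hrT.1), hk' v r hv (le_trans hvt hrT.1),
            hsymdot (α r) (hα_symm r) (f r) (f u), hsymdot (α r) (hα_symm r) (f r) (f v)]
          have hdra : ∀ i j, |(α r - α a) i j| ≤ (n:ℝ)^2 * C^2 * (M r - M a) := by
            intro i j
            have := hαdiff a r hta (le_of_lt hr.1) hrT.2 i j
            rw [show (α r - α a) i j = -((α a - α r) i j) by simp [Matrix.sub_apply], abs_neg]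
            exact this
          have hdrb : ∀ i j, |(α r - α b) i j| ≤ (n:ℝ)^2 * C^2 * (M b - M r) := by
            intro i j
            exact hαdiff r b hrT.1 hr.2 hbT i j
          have e1 : |((α r - α a) *ᵥ x) ⬝ᵥ f r| ≤ ((n:ℝ)^2 * C^2 * (M r - M a)) * U * F r :=
            hdot_le _ _ (by positivity) hdra x r
          have e2 : |(α r *ᵥ y) ⬝ᵥ f r| ≤ C * V * F r := hdot_le _ _ hC0 (hC r hrT) y r
          have e3 : |(α a *ᵥ x) ⬝ᵥ f r| ≤ C * U * F r :=
            hdot_le _ _ hC0 (hC a ⟨hta, le_trans hab hbT⟩) x r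
          have e4 : |((α r - α b) *ᵥ y) ⬝ᵥ f r| ≤ ((n:ℝ)^2 * C^2 * (M b - M r)) * V * F r :=
            hdot_le _ _ (by positivity) hdrb y r
          have hsplit2 : (α r *ᵥ x ⬝ᵥ f r) * (α r *ᵥ y ⬝ᵥ f r)
              - ((α a *ᵥ x) ⬝ᵥ f r) * ((α b *ᵥ y) ⬝ᵥ f r)
              = (((α r - α a) *ᵥ x) ⬝ᵥ f r) * ((α r *ᵥ y) ⬝ᵥ f r)
                + ((α a *ᵥ x) ⬝ᵥ f r) * (((α r - α b) *ᵥ y) ⬝ᵥ f r) := by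
            simp only [Matrix.sub_mulVec, sub_dotProduct]
            ring
          rw [hsplit2]
          calc |(((α r - α a) *ᵥ x) ⬝ᵥ f r) * ((α r *ᵥ y) ⬝ᵥ f r)
                + ((α a *ᵥ x) ⬝ᵥ f r) * (((α r - α b) *ᵥ y) ⬝ᵥ f r)|
              ≤ |(((α r - α a) *ᵥ x) ⬝ᵥ f r)| * |((α r *ᵥ y) ⬝ᵥ f r)|
                + |((α a *ᵥ x) ⬝ᵥ f r)| * |(((α r - α b) *ᵥ y) ⬝ᵥ f r)| := by
                refine le_trans (abs_add_le _ _) ?_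
                rw [abs_mul, abs_mul]
            _ ≤ (((n:ℝ)^2 * C^2 * (M r - M a)) * U * F r) * (C * V * F r)
                + (C * U * F r) * (((n:ℝ)^2 * C^2 * (M b - M r)) * V * F r) := by
                refine add_le_add (mul_le_mul e1 e2 (abs_nonneg _) (by positivity))
                  (mul_le_mul e3 e4 (abs_nonneg _) (by positivity))
            _ = ((n:ℝ)^2 * C^3 * U * V * ((M r - M a) + (M b - M r))) * F r ^ 2 := by ring
            _ ≤ ((n:ℝ)^2 * C^3 * U * V * (M b - M a)) * ((n:ℝ) * ∑ l, f r l ^ 2) := by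
                have heq : (M r - M a) + (M b - M r) = M b - M a := by ring
                rw [heq]
                exact mul_le_mul_of_nonneg_left (hFsq r) (by positivity)
            _ = ((n:ℝ)^3 * C^3 * U * V * (M b - M a)) * ∑ l, f r l ^ 2 := by ring
        calc |∫ r in Set.Ioc a b,
              (k r u * k r v - ((α a *ᵥ x) ⬝ᵥ f r) * ((α b *ᵥ y) ⬝ᵥ f r))|
            ≤ ∫ r in Set.Ioc a b, ((n:ℝ)^3 * C^3 * U * V * (M b - M a)) * ∑ l, f r l ^ 2 := by
              rw [← Real.norm_eq_abs]
              refine norm_integral_le_of_norm_le ((hS_int_loc a b hta).const_mul _) ?_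
              filter_upwards [ae_restrict_mem measurableSet_Ioc] with r hr
              rw [Real.norm_eq_abs]
              exact hbnd r hr
          _ = ((n:ℝ)^3 * C^3 * U * V * (M b - M a)) * ∫ r in Set.Ioc a b, ∑ l, f r l ^ 2 :=
              integral_const_mul _ _
          _ = K * (M b - M a)^2 := by
              rw [← hM_diff a b hta hab, hK]
              ring
      -- conclude via the continuous-induction lemma
      have hfinal := const_of_sq_increment H M hT K hK0 hM_cont hM_mono hHbound
      rw [hH] at hfinal
      simp only [Set.Ioc_self, Measure.restrict_empty, integral_zero_measure, add_zero] at hfinal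
      exact ⟨hkprod_int u v hu hut hv hvt t T le_rfl le_rfl, hfinal⟩
    -- integrability on Ioi t
    have hIoc_all : ∀ T : ℝ, IntegrableOn (fun r => k r u * k r v) (Set.Ioc t T) := by
      intro T
      rcases le_or_gt t T with h | h
      · exact (hstar T h u v hu hut hv hvt).1
      · rw [Set.Ioc_eq_empty (not_lt.2 h.le)]; exact integrableOn_empty
    have hIoi : IntegrableOn (fun r => k r u * k r v) (Set.Ioi t) := by
      refine integrableOn_Ioi_of_intervalIntegral_norm_bounded
        (((f u ⬝ᵥ α t *ᵥ f u) + (f v ⬝ᵥ α t *ᵥ f v)) / 2) t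
        (fun T : ℝ => hIoc_all T) tendsto_id ?_
      filter_upwards [eventually_ge_atTop t] with T hT
      have hi_uu := (hstar T hT u u hu hut hu hut).1
      have hi_vv := (hstar T hT v v hv hvt hv hvt).1
      have he_uu := (hstar T hT u u hu hut hu hut).2
      have he_vv := (hstar T hT v v hv hvt hv hvt).2
      have hp_u : 0 ≤ f u ⬝ᵥ α T *ᵥ f u := hpos T (by linarith) (f u)
      have hp_v : 0 ≤ f v ⬝ᵥ α T *ᵥ f v := hpos T (by linarith) (f v)
      rw [intervalIntegral.integral_of_le hT]
      simp only [Real.norm_eq_abs]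
      calc (∫ r in Set.Ioc t T, |k r u * k r v|)
          ≤ ∫ r in Set.Ioc t T, (k r u * k r u + k r v * k r v) / 2 := by
            refine integral_mono (hIoc_all T).abs ((hi_uu.add hi_vv).div_const 2) ?_
            intro r
            exact habs2 _ _
        _ = ((∫ r in Set.Ioc t T, k r u * k r u) + ∫ r in Set.Ioc t T, k r v * k r v) / 2 := by
            rw [integral_div, integral_add hi_uu hi_vv]
        _ ≤ ((f u ⬝ᵥ α t *ᵥ f u) + (f v ⬝ᵥ α t *ᵥ f v)) / 2 := by
            have e1 : (∫ r in Set.Ioc t T, k r u * k r u)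
                = (f u ⬝ᵥ α t *ᵥ f u) - (f u ⬝ᵥ α T *ᵥ f u) := by linarith
            have e2 : (∫ r in Set.Ioc t T, k r v * k r v)
                = (f v ⬝ᵥ α t *ᵥ f v) - (f v ⬝ᵥ α T *ᵥ f v) := by linarith
            rw [e1, e2]
            have := hp_u
            have := hp_v
            linarith
    refine ⟨hIoi, ?_⟩
    -- limits
    have hκlim : Tendsto (fun T => f u ⬝ᵥ α T *ᵥ f v) atTop (𝓝 (f u ⬝ᵥ A *ᵥ f v)) := by
      have hexp : ∀ B : Matrix (Fin n) (Fin n) ℝ,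
          f u ⬝ᵥ B *ᵥ f v = ∑ i, ∑ j, f u i * (B i j * f v j) := by
        intro B
        simp [dotProduct, Matrix.mulVec, Finset.mul_sum]
      simp only [hexp]
      exact tendsto_finset_sum _ fun i _ => tendsto_finset_sum _ fun j _ =>
        (((hA i j).mul_const _).const_mul _)
    have hintlim : Tendsto (fun T => ∫ r in Set.Ioc t T, k r u * k r v) atTop
        (𝓝 (∫ r in Set.Ioi t, k r u * k r v)) := by
      have h0 : Tendsto (fun T : ℝ => ∫ r in t..T, k r u * k r v) atTop
          (𝓝 (∫ r in Set.Ioi t, k r u * k r v)) :=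
        intervalIntegral_tendsto_integral_Ioi t hIoi tendsto_id
      refine Tendsto.congr' ?_ h0
      filter_upwards [eventually_ge_atTop t] with T hT
      rw [intervalIntegral.integral_of_le hT]
    have hT1 : Tendsto (fun T => f u ⬝ᵥ α T *ᵥ f v + ∫ r in Set.Ioc t T, k r u * k r v)
        atTop (𝓝 (f u ⬝ᵥ A *ᵥ f v + ∫ r in Set.Ioi t, k r u * k r v)) :=
      hκlim.add hintlim
    have hT2 : (fun T => f u ⬝ᵥ α T *ᵥ f v + ∫ r in Set.Ioc t T, k r u * k r v)
        =ᶠ[atTop] (fun _ => f u ⬝ᵥ α t *ᵥ f v) := by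
      filter_upwards [eventually_ge_atTop t] with T hT
      exact (hstar T hT u v hu hut hv hvt).2
    have hfin := tendsto_nhds_unique (hT1.congr' hT2) tendsto_const_nhds
    rw [hκ]
    have : (α t).mulVec (f v) = α t *ᵥ f v := rfl
    rw [this]
    linarith
  · -- kernel identity
    intro s t hs hst
    have ht0 : (0:ℝ) < t := lt_of_lt_of_le hs hst
    rw [hk s t hs hst, hφ t, hκ]
    show (α t *ᵥ f t) ⬝ᵥ f s = f t ⬝ᵥ (α t *ᵥ f s)
    rw [hsymdot (α t) (hα_symm t) (f t) (f s)]
    exact dotProduct_comm _ _
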